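/- Let G be a finite nilpotent group whose order is divisible by exactly r ≥ 2 distinct primes p₁, ..., p_r, and let P_i denote the (unique) Sylow p_i-subgroup of G. Then for non-identity elements x ∈ P_i and y ∈ P_j, x and y are adjacent in the difference graph D(G) if and only if i ≠ j; hence the subgraph of D(G) induced by the set (P₁ ∪ P₂ ∪ ⋯ ∪ P_r) \ {e} is the complete r-partite graph K_{|P₁|−1, |P₂|−1, ..., |P_r|−1}. -/

import Mathlib

/-- Adjacency in the power graph `P(G)`: distinct `a`, `b` are adjacent iff one is a
power of the other. -/
def powAdj {G : Type*} [Group G] (a b : G) : Prop :=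
  a ≠ b ∧ (a ∈ Subgroup.zpowers b ∨ b ∈ Subgroup.zpowers a)

/-- Adjacency in the enhanced power graph `P_E(G)`: distinct `a`, `b` are adjacent iff
both are powers of a common element `c`. -/
def enhAdj {G : Type*} [Group G] (a b : G) : Prop :=
  a ≠ b ∧ ∃ c : G, a ∈ Subgroup.zpowers c ∧ b ∈ Subgroup.zpowers c

/-- Adjacency in the difference graph `D(G) = P_E(G) − P(G)`: adjacent in the enhanced
power graph but not in the power graph. -/
def diffAdj {G : Type*} [Group G] (a b : G) : Prop :=
  enhAdj a b ∧ ¬ powAdj a b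

open Subgroup Finset


lemma aux_mem_zpowers_of_orderOf_dvd {G : Type*} [Group G] [Finite G] [IsCyclic G]
    {a b : G} (h : orderOf a ∣ orderOf b) : a ∈ Subgroup.zpowers b := by
  classical
  have := Fintype.ofFinite G
  have hn0 : 0 < orderOf b := orderOf_pos b
  set n := orderOf b with hn
  set S : Finset G := Finset.univ.filter (fun g => g ^ n = 1) with hS
  have hTsub : (Subgroup.zpowers b : Set G).toFinset ⊆ S := by
    intro g hg
    rw [Set.mem_toFinset] at hg
    have : orderOf g ∣ n := orderOf_dvd_of_mem_zpowers hg
    simp only [hS, Finset.mem_filter, Finset.mem_univ, true_and]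
    exact orderOf_dvd_iff_pow_eq_one.mp this
  have hcardT : (Subgroup.zpowers b : Set G).toFinset.card = n := by
    simp only [Set.toFinset_card, SetLike.coe_sort_coe, Fintype.card_zpowers]
    exact hn.symm
  have hle : S.card ≤ n := IsCyclic.card_pow_eq_one_le hn0
  have heq := Finset.eq_of_subset_of_card_le hTsub (by rw [hcardT]; exact hle)
  have ha : a ∈ S := by
    simp only [hS, Finset.mem_filter, Finset.mem_univ, true_and]
    exact orderOf_dvd_iff_pow_eq_one.mp h
  rw [← heq, Set.mem_toFinset] at ha
  exact ha

/-- zpowers is cyclic -/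
lemma aux_isCyclic_zpowers {G : Type*} [Group G] (c : G) : IsCyclic (Subgroup.zpowers c) := by
  refine ⟨⟨⟨c, Subgroup.mem_zpowers c⟩, fun x => ?_⟩⟩
  obtain ⟨k, hk⟩ := x.2
  exact ⟨k, Subtype.ext (by simpa using hk)⟩

/-- In any group, two elements of p-power order (same prime p) lying in a common cyclic
subgroup satisfy: one is a power of the other. -/
lemma aux_chain {G : Type*} [Group G] [Finite G] {c x y : G} (pp : ℕ)
    (hxc : x ∈ Subgroup.zpowers c) (hyc : y ∈ Subgroup.zpowers c)
    {s t : ℕ} (hox : orderOf x = pp ^ s) (hoy : orderOf y = pp ^ t) :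
    x ∈ Subgroup.zpowers y ∨ y ∈ Subgroup.zpowers x := by
  haveI := aux_isCyclic_zpowers c
  set H := Subgroup.zpowers c
  set x' : H := ⟨x, hxc⟩
  set y' : H := ⟨y, hyc⟩
  have hox' : orderOf x' = pp ^ s := by rw [Subgroup.orderOf_mk]; exact hox
  have hoy' : orderOf y' = pp ^ t := by rw [Subgroup.orderOf_mk]; exact hoy
  rcases le_total s t with hst | hst
  · left
    have : orderOf x' ∣ orderOf y' := by rw [hox', hoy']; exact pow_dvd_pow _ hst
    obtain ⟨k, hk⟩ := aux_mem_zpowers_of_orderOf_dvd this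
    exact ⟨k, by simpa using congrArg Subtype.val hk⟩
  · right
    have : orderOf y' ∣ orderOf x' := by rw [hox', hoy']; exact pow_dvd_pow _ hst
    obtain ⟨k, hk⟩ := aux_mem_zpowers_of_orderOf_dvd this
    exact ⟨k, by simpa using congrArg Subtype.val hk⟩

/-- commuting elements of coprime orders: each is a power of the product -/
lemma aux_mem_zpowers_mul {G : Type*} [Group G] [Finite G] {x y : G}
    (hc : Commute x y) (hco : Nat.Coprime (orderOf x) (orderOf y)) :
    x ∈ Subgroup.zpowers (x * y) := by
  set m := orderOf x
  set n := orderOf y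
  have hb : (1 : ℤ) = m * Nat.gcdA m n + n * Nat.gcdB m n := by
    have := Nat.gcd_eq_gcd_ab m n
    rwa [hco] at this
  refine ⟨n * Nat.gcdB m n, ?_⟩
  have hxm : x ^ (m : ℤ) = 1 := by
    rw [zpow_natCast]; exact pow_orderOf_eq_one x
  have hyn : y ^ (n : ℤ) = 1 := by
    rw [zpow_natCast]; exact pow_orderOf_eq_one y
  show (x * y) ^ ((n : ℤ) * Nat.gcdB m n) = x
  rw [hc.mul_zpow]
  have h1 : y ^ ((n : ℤ) * Nat.gcdB m n) = 1 := by
    rw [zpow_mul, hyn, one_zpow]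
  have h2 : x ^ ((n : ℤ) * Nat.gcdB m n) = x := by
    have : x ^ ((m : ℤ) * Nat.gcdA m n + n * Nat.gcdB m n) = x := by
      rw [← hb, zpow_one]
    rw [zpow_add, zpow_mul, hxm, one_zpow, one_mul] at this
    exact this
  rw [h1, h2, mul_one]


/-- Let G be a finite nilpotent group whose order is divisible by
exactly r ≥ 2 distinct primes p₁, ..., p_r, and let P_i denote the (unique) Sylow
p_i-subgroup of G. Then for non-identity elements x ∈ P_i and y ∈ P_j, x and y are
adjacent in the difference graph D(G) if and only if i ≠ j; hence the subgraph of
D(G) induced by (P₁ ∪ ⋯ ∪ P_r) \ {e} is the complete r-partite graph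
K_{|P₁|−1, ..., |P_r|−1}. -/
theorem nilpotent_sylow_diffAdj_iff {G : Type*} [Group G] [Finite G]
    (hnil : Group.IsNilpotent G) (r : ℕ) (hr : 2 ≤ r)
    (p : Fin r → ℕ) (hp : ∀ i, (p i).Prime) (hinj : Function.Injective p)
    (hfac : (Nat.card G).primeFactors = Finset.image p Finset.univ)
    (P : (i : Fin r) → Sylow (p i) G)
    (i j : Fin r) (x y : G) (hx : x ∈ P i) (hy : y ∈ P j)
    (hx1 : x ≠ 1) (hy1 : y ≠ 1) :
    diffAdj x y ↔ i ≠ j := by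
  haveI hFi : Fact (p i).Prime := ⟨hp i⟩
  haveI hFj : Fact (p j).Prime := ⟨hp j⟩
  obtain ⟨si, hsi⟩ := IsPGroup.iff_orderOf.mp (P i).isPGroup' (⟨x, hx⟩ : (P i : Subgroup G))
  rw [Subgroup.orderOf_mk] at hsi
  obtain ⟨sj, hsj⟩ := IsPGroup.iff_orderOf.mp (P j).isPGroup' (⟨y, hy⟩ : (P j : Subgroup G))
  rw [Subgroup.orderOf_mk] at hsj
  have hsi0 : 0 < si := by
    rcases Nat.eq_zero_or_pos si with h | h
    · exfalso; apply hx1; rw [← orderOf_eq_one_iff, hsi, h, pow_zero]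
    · exact h
  have hsj0 : 0 < sj := by
    rcases Nat.eq_zero_or_pos sj with h | h
    · exfalso; apply hy1; rw [← orderOf_eq_one_iff, hsj, h, pow_zero]
    · exact h
  constructor
  · rintro ⟨⟨hne, c, hxc, hyc⟩, hnp⟩
    intro hij
    subst hij
    exact hnp ⟨hne, aux_chain (p i) hxc hyc hsi hsj⟩
  · intro hij
    have hpp : p i ≠ p j := fun h => hij (hinj h)
    have hnorm : ∀ (q : ℕ) (_ : Fact q.Prime) (Q : Sylow q G), (Q : Subgroup G).Normal :=
      (isNilpotent_of_finite_tfae.out 0 3).mp hnil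
    have hdis : Disjoint ((P i : Subgroup G)) ((P j : Subgroup G)) :=
      IsPGroup.disjoint_of_ne (p i) (p j) hpp _ _ (P i).isPGroup' (P j).isPGroup'
    have hcomm : Commute x y :=
      Subgroup.commute_of_normal_of_disjoint _ _ (hnorm (p i) hFi (P i))
        (hnorm (p j) hFj (P j)) hdis x y hx hy
    have hco : Nat.Coprime (orderOf x) (orderOf y) := by
      rw [hsi, hsj]
      exact Nat.coprime_pow_primes _ _ (hp i) (hp j) hpp
    have hne : x ≠ y := by
      intro h
      subst h
      rw [hsi] at hsj
      exact hpp (eq_of_prime_pow_eq (hp i).prime (hp j).prime hsi0 hsj)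
    have hxmem : x ∈ Subgroup.zpowers (x * y) := aux_mem_zpowers_mul hcomm hco
    have hymem : y ∈ Subgroup.zpowers (x * y) := by
      have := aux_mem_zpowers_mul hcomm.symm (Nat.Coprime.symm hco)
      rwa [← hcomm.eq] at this
    refine ⟨⟨hne, x * y, hxmem, hymem⟩, ?_⟩
    rintro ⟨-, h | h⟩
    · have hd : orderOf x ∣ orderOf y := orderOf_dvd_of_mem_zpowers h
      rw [hsi, hsj] at hd
      have : p i ∣ p j ^ sj := dvd_trans (dvd_pow_self _ hsi0.ne') hd
      exact hpp ((Nat.prime_dvd_prime_iff_eq (hp i) (hp j)).mp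
        ((hp i).dvd_of_dvd_pow this))
    · have hd : orderOf y ∣ orderOf x := orderOf_dvd_of_mem_zpowers h
      rw [hsi, hsj] at hd
      have : p j ∣ p i ^ si := dvd_trans (dvd_pow_self _ hsj0.ne') hd
      exact hpp (((Nat.prime_dvd_prime_iff_eq (hp j) (hp i)).mp
        ((hp j).dvd_of_dvd_pow this)).symm)
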